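/- Let P be a π-stationary transition matrix on the finite product state space X = X^(1) × … × X^(d), where π is of product form, let k ∈ ℕ and fix 𝐕 = (V_1,…,V_k) ∈ (k+1)^⟦d⟧. Then the map 𝐒 = (S_1,…,S_k) ↦ D(⊗_{i=1}^k P^(V_i \ S_i) ‖ ⊗_{i=1}^k Π^(V_i \ S_i)) = Σ_{i=1}^k D(P^(V_i \ S_i) ‖ Π^(V_i \ S_i)), defined on {𝐒 ∈ (k+1)^⟦d⟧ : 𝐒 ≼ 𝐕}, is monotonically non-increasing and k-supermodular. -/

import Mathlib

open scoped Classical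

noncomputable section

variable {d : ℕ}

/-- A `k`-tuple of subsets is pairwise disjoint (i.e. it is an element of `(k+1)^U`). -/
def PwDisj {α : Type*} {k : ℕ} (S : Fin k → Finset α) : Prop :=
  ∀ i j : Fin k, i ≠ j → Disjoint (S i) (S j)

/-- Restriction of a global state to the coordinates in `S`. -/
def restrict (𝒳 : Fin d → Type) (S : Finset (Fin d)) (x : ∀ i, 𝒳 i) :
    ∀ i : S, 𝒳 i.1 := fun i => x i.1

/-- Marginal of `π` on the coordinates in `S`. -/
def marginal (𝒳 : Fin d → Type) [∀ i, Fintype (𝒳 i)]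
    (π : (∀ i, 𝒳 i) → ℝ) (S : Finset (Fin d)) (z : ∀ i : S, 𝒳 i.1) : ℝ :=
  ∑ x : ∀ i, 𝒳 i, if restrict 𝒳 S x = z then π x else 0

/-- Keep-`S`-in transition matrix of `P` with respect to `π`. -/
def keepIn (𝒳 : Fin d → Type) [∀ i, Fintype (𝒳 i)]
    (π : (∀ i, 𝒳 i) → ℝ) (P : (∀ i, 𝒳 i) → (∀ i, 𝒳 i) → ℝ)
    (S : Finset (Fin d)) (z w : ∀ i : S, 𝒳 i.1) : ℝ :=
  (∑ x : ∀ i, 𝒳 i, ∑ y : ∀ i, 𝒳 i,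
      if restrict 𝒳 S x = z ∧ restrict 𝒳 S y = w then π x * P x y else 0) /
    marginal 𝒳 π S z

/-- Entropy rate of a transition matrix `M` with respect to `μ`
    (with the convention `0 ln 0 = 0`). -/
def entRate {Y : Type*} [Fintype Y] (μ : Y → ℝ) (M : Y → Y → ℝ) : ℝ :=
  -∑ x, ∑ y, μ x * M x y * Real.log (M x y)

/-- KL divergence rate from `L` to `M` with respect to `μ`
    (with the convention `0 ln (0/a) = 0`). -/
def klRate {Y : Type*} [Fintype Y] (μ : Y → ℝ) (M L : Y → Y → ℝ) : ℝ :=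
  ∑ x, ∑ y, μ x * M x y * Real.log (M x y / L x y)

/-- Keep-`{i}`-in single-coordinate transition matrix `P^(i)`. -/
def single (𝒳 : Fin d → Type) [∀ i, Fintype (𝒳 i)]
    (π : (∀ i, 𝒳 i) → ℝ) (P : (∀ i, 𝒳 i) → (∀ i, 𝒳 i) → ℝ)
    (i : Fin d) (a b : 𝒳 i) : ℝ :=
  (∑ x : ∀ j, 𝒳 j, ∑ y : ∀ j, 𝒳 j, if x i = a ∧ y i = b then π x * P x y else 0) /
    (∑ x : ∀ j, 𝒳 j, if x i = a then π x else 0)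

/-- Tensor product over `S` of the single-coordinate matrices `P^(i)`, `i ∈ S`. -/
def indepKernel (𝒳 : Fin d → Type) [∀ i, Fintype (𝒳 i)]
    (π : (∀ i, 𝒳 i) → ℝ) (P : (∀ i, 𝒳 i) → (∀ i, 𝒳 i) → ℝ)
    (S : Finset (Fin d)) (z w : ∀ i : S, 𝒳 i.1) : ℝ :=
  ∏ i : S, single 𝒳 π P i.1 (z i) (w i)

/-- Distance to independence `𝕀(P^(S)) = D(P^(S) ‖ ⊗_{i ∈ S} P^(i))`. -/
def distToIndep (𝒳 : Fin d → Type) [∀ i, Fintype (𝒳 i)]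
    (π : (∀ i, 𝒳 i) → ℝ) (P : (∀ i, 𝒳 i) → (∀ i, 𝒳 i) → ℝ)
    (S : Finset (Fin d)) : ℝ :=
  klRate (marginal 𝒳 π S) (keepIn 𝒳 π P S) (indepKernel 𝒳 π P S)

/-- Entropy rate `H(P^(S))` of the keep-`S`-in transition matrix. -/
def entKeepIn (𝒳 : Fin d → Type) [∀ i, Fintype (𝒳 i)]
    (π : (∀ i, 𝒳 i) → ℝ) (P : (∀ i, 𝒳 i) → (∀ i, 𝒳 i) → ℝ)
    (S : Finset (Fin d)) : ℝ :=
  entRate (marginal 𝒳 π S) (keepIn 𝒳 π P S)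

/-- Distance to stationarity `D(P^(S) ‖ Π^(S))`, where every row of `Π^(S)` is `π^(S)`. -/
def distToStat (𝒳 : Fin d → Type) [∀ i, Fintype (𝒳 i)]
    (π : (∀ i, 𝒳 i) → ℝ) (P : (∀ i, 𝒳 i) → (∀ i, 𝒳 i) → ℝ)
    (S : Finset (Fin d)) : ℝ :=
  klRate (marginal 𝒳 π S) (keepIn 𝒳 π P S) (fun _ w => marginal 𝒳 π S w)

/-- Single-coordinate marginal `π^(i)`. -/
def singleMarginal (𝒳 : Fin d → Type) [∀ i, Fintype (𝒳 i)]
    (π : (∀ i, 𝒳 i) → ℝ) (i : Fin d) (a : 𝒳 i) : ℝ :=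
  ∑ x : ∀ j, 𝒳 j, if x i = a then π x else 0


/-- The meet `𝐒 ⊓ 𝐓`, with `i`-th component `S i ∩ T i`. -/
def kInf {α : Type*} [DecidableEq α] {k : ℕ} (S T : Fin k → Finset α) :
    Fin k → Finset α := fun i => S i ∩ T i

/-- The join `𝐒 ⊔ 𝐓`, with `i`-th component `(S i ∪ T i) \ ∪_{j ≠ i} (S j ∪ T j)`. -/
def kSup {α : Type*} [DecidableEq α] {k : ℕ} (S T : Fin k → Finset α) :
    Fin k → Finset α :=
  fun i => (S i ∪ T i) \ ((Finset.univ.erase i).biUnion fun j => S j ∪ T j)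

set_option linter.unusedSectionVars false
set_option linter.unusedVariables false

namespace EntSub
variable {ι : Type} [Fintype ι] [DecidableEq ι] {𝒴 : ι → Type} [∀ i, Fintype (𝒴 i)]
  [∀ i, Nonempty (𝒴 i)]

def rest (S : Finset ι) (t : ∀ i, 𝒴 i) : ∀ i : S, 𝒴 i.1 := fun i => t i.1

def marg (ν : (∀ i, 𝒴 i) → ℝ) (S : Finset ι) (z : ∀ i : S, 𝒴 i.1) : ℝ :=
  ∑ t, if rest S t = z then ν t else 0

def ent (ν : (∀ i, 𝒴 i) → ℝ) (S : Finset ι) : ℝ :=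
  -∑ z, marg ν S z * Real.log (marg ν S z)

def extend (S : Finset ι) (z : ∀ i : S, 𝒴 i.1) : ∀ i, 𝒴 i :=
  fun i => if h : i ∈ S then z ⟨i, h⟩ else Classical.arbitrary _

theorem rest_extend (S : Finset ι) (z : ∀ i : S, 𝒴 i.1) : rest S (extend S z) = z := by
  funext i
  simp [rest, extend, i.2]

theorem rest_congr {S U : Finset ι} (hSU : S ⊆ U) {t t' : ∀ i, 𝒴 i}
    (h : rest U t = rest U t') : rest S t = rest S t' := by
  funext i
  exact congrFun h ⟨i.1, hSU i.2⟩

theorem sum_marg_mul (ν : (∀ i, 𝒴 i) → ℝ) (S : Finset ι) (F : (∀ i : S, 𝒴 i.1) → ℝ) :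
    ∑ z, marg ν S z * F z = ∑ t, ν t * F (rest S t) := by
  unfold marg
  calc ∑ z, (∑ t, if rest S t = z then ν t else 0) * F z
      = ∑ z, ∑ t, (if rest S t = z then ν t * F z else 0) := by
        refine Finset.sum_congr rfl fun z _ => ?_
        rw [Finset.sum_mul]
        exact Finset.sum_congr rfl fun t _ => by split <;> simp
    _ = ∑ t, ∑ z, (if rest S t = z then ν t * F z else 0) := Finset.sum_comm
    _ = ∑ t, ν t * F (rest S t) := by
        refine Finset.sum_congr rfl fun t _ => ?_
        rw [Finset.sum_ite_eq]
        simp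

theorem marg_nonneg {ν : (∀ i, 𝒴 i) → ℝ} (hν : ∀ t, 0 ≤ ν t) (S : Finset ι)
    (z : ∀ i : S, 𝒴 i.1) : 0 ≤ marg ν S z :=
  Finset.sum_nonneg fun t _ => by split <;> [exact hν t; exact le_rfl]

theorem marg_total (ν : (∀ i, 𝒴 i) → ℝ) (S : Finset ι) :
    ∑ z, marg ν S z = ∑ t, ν t := by
  simpa using sum_marg_mul ν S (fun _ => 1)

theorem marg_le_marg {ν : (∀ i, 𝒴 i) → ℝ} (hν : ∀ t, 0 ≤ ν t) {S U : Finset ι}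
    (hSU : S ⊆ U) (t : ∀ i, 𝒴 i) :
    marg ν U (rest U t) ≤ marg ν S (rest S t) := by
  apply Finset.sum_le_sum
  intro s _
  by_cases h : rest U s = rest U t
  · rw [if_pos h, if_pos (rest_congr hSU h)]
  · rw [if_neg h]
    split <;> [exact hν s; exact le_rfl]

theorem self_le_marg {ν : (∀ i, 𝒴 i) → ℝ} (hν : ∀ t, 0 ≤ ν t) (S : Finset ι)
    (t : ∀ i, 𝒴 i) : ν t ≤ marg ν S (rest S t) := by
  have := Finset.single_le_sum (f := fun s => if rest S s = rest S t then ν s else 0)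
    (fun s _ => by split <;> [exact hν s; exact le_rfl]) (Finset.mem_univ t)
  simpa [marg] using this

/-- fiber counting -/
theorem sum_ite_rest_eq (W : Finset ι) (u : ∀ i, 𝒴 i) :
    (∑ t : ∀ i, 𝒴 i, if rest W t = rest W u then (1:ℝ) else 0)
      = ∏ i ∈ Wᶜ, (Fintype.card (𝒴 i) : ℝ) := by
  have h1 : ∀ t : ∀ i, 𝒴 i, (if rest W t = rest W u then (1:ℝ) else 0)
      = ∏ i, (if i ∈ W then (if t i = u i then (1:ℝ) else 0) else 1) := by
    intro t
    by_cases h : rest W t = rest W u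
    · rw [if_pos h, Finset.prod_eq_one]
      intro i _
      by_cases hi : i ∈ W
      · have : t i = u i := congrFun h ⟨i, hi⟩
        simp [hi, this]
      · simp [hi]
    · rw [if_neg h, eq_comm]
      have : ∃ i ∈ W, t i ≠ u i := by
        by_contra hc
        push_neg at hc
        exact h (funext fun i => hc i.1 i.2)
      obtain ⟨i, hi, hne⟩ := this
      rw [Finset.prod_eq_zero (Finset.mem_univ i)]
      simp [hi, hne]
  simp_rw [h1]
  have hps : (∏ i : ι, ∑ a : 𝒴 i, (if i ∈ W then (if a = u i then (1:ℝ) else 0) else 1))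
      = ∑ x ∈ Fintype.piFinset (fun i => (Finset.univ : Finset (𝒴 i))),
          ∏ i, (if i ∈ W then (if x i = u i then (1:ℝ) else 0) else 1) :=
    Finset.prod_univ_sum _ _
  rw [← Fintype.piFinset_univ, ← hps]
  have h2 : ∀ i : ι, (∑ a : 𝒴 i, if i ∈ W then (if a = u i then (1:ℝ) else 0) else 1)
      = if i ∈ W then 1 else (Fintype.card (𝒴 i) : ℝ) := by
    intro i
    by_cases hi : i ∈ W <;> simp [hi]
  simp_rw [h2]
  rw [← Finset.prod_subset (Finset.subset_univ Wᶜ)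
    (fun i _ hi => by simp [show i ∈ W by simpa using hi])]
  exact Finset.prod_congr rfl fun i hi => by simp [Finset.mem_compl.mp hi]

theorem sum_ite_rest_eq' (W : Finset ι) (z : ∀ i : W, 𝒴 i.1) :
    (∑ t : ∀ i, 𝒴 i, if rest W t = z then (1:ℝ) else 0)
      = ∏ i ∈ Wᶜ, (Fintype.card (𝒴 i) : ℝ) := by
  rw [← rest_extend W z]
  exact sum_ite_rest_eq W (extend W z)

theorem sum_comp_rest (S : Finset ι) (H : (∀ i : S, 𝒴 i.1) → ℝ) :
    ∑ t, H (rest S t) = (∏ i ∈ Sᶜ, (Fintype.card (𝒴 i) : ℝ)) * ∑ z, H z := by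
  have h0 : ∀ t : ∀ i, 𝒴 i, H (rest S t) = ∑ z, if rest S t = z then H z else 0 := by
    intro t
    rw [Finset.sum_ite_eq]
    simp
  simp_rw [h0]
  rw [Finset.sum_comm]
  have h1 : ∀ z, (∑ t : ∀ i, 𝒴 i, if rest S t = z then H z else 0)
      = (∏ i ∈ Sᶜ, (Fintype.card (𝒴 i) : ℝ)) * H z := by
    intro z
    calc (∑ t : ∀ i, 𝒴 i, if rest S t = z then H z else 0)
        = ∑ t : ∀ i, 𝒴 i, (if rest S t = z then (1:ℝ) else 0) * H z :=
          Finset.sum_congr rfl fun t _ => by split <;> simp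
      _ = _ := by rw [← Finset.sum_mul, sum_ite_rest_eq']
  simp_rw [h1]
  rw [← Finset.mul_sum]
theorem count_two {A B : Finset ι} (s r : ∀ i, 𝒴 i) :
    (∑ t : ∀ i, 𝒴 i, if rest A t = rest A s ∧ rest B t = rest B r then (1:ℝ) else 0)
      = if rest (A ∩ B) r = rest (A ∩ B) s then ∏ i ∈ (A ∪ B)ᶜ, (Fintype.card (𝒴 i) : ℝ)
        else 0 := by
  by_cases hc : rest (A ∩ B) r = rest (A ∩ B) s
  · rw [if_pos hc]
    set u : ∀ i, 𝒴 i := fun i => if i ∈ A then s i else r i with hu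
    have hiff : ∀ t : ∀ i, 𝒴 i,
        (rest A t = rest A s ∧ rest B t = rest B r) ↔ rest (A ∪ B) t = rest (A ∪ B) u := by
      intro t
      constructor
      · rintro ⟨h1, h2⟩
        funext i
        rcases Finset.mem_union.mp i.2 with hi | hi
        · have := congrFun h1 ⟨i.1, hi⟩
          simp only [rest] at this ⊢
          rw [this, hu]
          simp [hi]
        · have := congrFun h2 ⟨i.1, hi⟩
          simp only [rest] at this ⊢
          rw [this, hu]
          by_cases hiA : i.1 ∈ A
          · have := congrFun hc ⟨i.1, Finset.mem_inter.mpr ⟨hiA, hi⟩⟩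
            simp only [rest] at this
            simp [hiA, this]
          · simp [hiA]
      · intro h
        constructor
        · funext i
          have := congrFun h ⟨i.1, Finset.mem_union_left _ i.2⟩
          simp only [rest] at this ⊢
          rw [this, hu]
          simp [i.2]
        · funext i
          have := congrFun h ⟨i.1, Finset.mem_union_right _ i.2⟩
          simp only [rest] at this ⊢
          rw [this, hu]
          by_cases hiA : i.1 ∈ A
          · have := congrFun hc ⟨i.1, Finset.mem_inter.mpr ⟨hiA, i.2⟩⟩
            simp only [rest] at this
            simp [hiA, this]
          · simp [hiA]
    calc (∑ t : ∀ i, 𝒴 i, if rest A t = rest A s ∧ rest B t = rest B r then (1:ℝ) else 0)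
        = ∑ t : ∀ i, 𝒴 i, if rest (A ∪ B) t = rest (A ∪ B) u then (1:ℝ) else 0 :=
          Finset.sum_congr rfl fun t _ => by rw [if_congr (hiff t) rfl rfl]
      _ = _ := sum_ite_rest_eq _ u
  · rw [if_neg hc]
    refine Finset.sum_eq_zero fun t _ => ?_
    rw [if_neg]
    rintro ⟨h1, h2⟩
    exact hc ((rest_congr Finset.inter_subset_right h2).symm.trans
      (rest_congr Finset.inter_subset_left h1))

theorem fiber_sum_marg {ν : (∀ i, 𝒴 i) → ℝ} {A B : Finset ι} (s : ∀ i, 𝒴 i) :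
    (∑ t : ∀ i, 𝒴 i, if rest A t = rest A s then marg ν B (rest B t) else 0)
      = (∏ i ∈ (A ∪ B)ᶜ, (Fintype.card (𝒴 i) : ℝ)) * marg ν (A ∩ B) (rest (A ∩ B) s) := by
  unfold marg
  calc (∑ t : ∀ i, 𝒴 i, if rest A t = rest A s then
          (∑ r : ∀ i, 𝒴 i, if rest B r = rest B t then ν r else 0) else 0)
      = ∑ t : ∀ i, 𝒴 i, ∑ r : ∀ i, 𝒴 i,
          (if rest A t = rest A s ∧ rest B t = rest B r then ν r else 0) := by
        refine Finset.sum_congr rfl fun t _ => ?_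
        by_cases h : rest A t = rest A s
        · rw [if_pos h]
          refine Finset.sum_congr rfl fun r _ => ?_
          by_cases h2 : rest B t = rest B r
          · rw [if_pos h2.symm, if_pos ⟨h, h2⟩]
          · rw [if_neg (fun hh => h2 hh.symm), if_neg (fun hh => h2 hh.2)]
        · rw [if_neg h]
          exact (Finset.sum_eq_zero fun r _ => by rw [if_neg (fun hh => h hh.1)]).symm
    _ = ∑ r : ∀ i, 𝒴 i, ∑ t : ∀ i, 𝒴 i,
          (if rest A t = rest A s ∧ rest B t = rest B r then ν r else 0) := Finset.sum_comm
    _ = ∑ r : ∀ i, 𝒴 i, ν r *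
          (if rest (A ∩ B) r = rest (A ∩ B) s then
            ∏ i ∈ (A ∪ B)ᶜ, (Fintype.card (𝒴 i) : ℝ) else 0) := by
        refine Finset.sum_congr rfl fun r _ => ?_
        rw [← count_two s r, Finset.mul_sum]
        exact Finset.sum_congr rfl fun t _ => by split <;> simp
    _ = _ := by
        rw [Finset.mul_sum]
        refine Finset.sum_congr rfl fun r _ => ?_
        split <;> ring
theorem key_bound {ν : (∀ i, 𝒴 i) → ℝ} (hν : ∀ t, 0 ≤ ν t) (A B : Finset ι) :
    (∑ t : ∀ i, 𝒴 i,
        marg ν A (rest A t) * (marg ν B (rest B t) / marg ν (A ∩ B) (rest (A ∩ B) t)))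
      ≤ (∏ i ∈ (A ∪ B)ᶜ, (Fintype.card (𝒴 i) : ℝ)) * ∑ t, ν t := by
  set c := ∏ i ∈ (A ∪ B)ᶜ, (Fintype.card (𝒴 i) : ℝ) with hc
  have hc0 : 0 ≤ c := Finset.prod_nonneg fun i _ => Nat.cast_nonneg _
  set K : (∀ i, 𝒴 i) → ℝ :=
    fun t => marg ν B (rest B t) / marg ν (A ∩ B) (rest (A ∩ B) t) with hK
  have hswap : (∑ t : ∀ i, 𝒴 i, marg ν A (rest A t) * K t)
      = ∑ s : ∀ i, 𝒴 i, ν s * ∑ t : ∀ i, 𝒴 i, (if rest A t = rest A s then K t else 0) := by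
    calc ∑ t : ∀ i, 𝒴 i, marg ν A (rest A t) * K t
        = ∑ t : ∀ i, 𝒴 i, ∑ s : ∀ i, 𝒴 i, (if rest A s = rest A t then ν s * K t else 0) := by
          refine Finset.sum_congr rfl fun t _ => ?_
          rw [marg, Finset.sum_mul]
          exact Finset.sum_congr rfl fun s _ => by split <;> simp
      _ = ∑ s : ∀ i, 𝒴 i, ∑ t : ∀ i, 𝒴 i, (if rest A s = rest A t then ν s * K t else 0) :=
          Finset.sum_comm
      _ = _ := by
          refine Finset.sum_congr rfl fun s _ => ?_
          rw [Finset.mul_sum]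
          refine Finset.sum_congr rfl fun t _ => ?_
          by_cases h : rest A t = rest A s
          · rw [if_pos h.symm, if_pos h]
          · rw [if_neg (fun hh => h hh.symm), if_neg h, mul_zero]
  rw [hswap]
  have hinner : ∀ s : ∀ i, 𝒴 i,
      (∑ t : ∀ i, 𝒴 i, if rest A t = rest A s then K t else 0) ≤ c := by
    intro s
    have hrw : ∀ t : ∀ i, 𝒴 i, (if rest A t = rest A s then K t else 0)
        = (if rest A t = rest A s then marg ν B (rest B t) else 0)
            / marg ν (A ∩ B) (rest (A ∩ B) s) := by
      intro t
      by_cases h : rest A t = rest A s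
      · rw [if_pos h, if_pos h]
        show marg ν B (rest B t) / marg ν (A ∩ B) (rest (A ∩ B) t) = _
        rw [congrArg (marg ν (A ∩ B)) (rest_congr Finset.inter_subset_left h)]
      · rw [if_neg h, if_neg h, zero_div]
    simp_rw [hrw]
    rw [← Finset.sum_div, fiber_sum_marg (ν := ν) s]
    by_cases hMI : marg ν (A ∩ B) (rest (A ∩ B) s) = 0
    · rw [hMI, div_zero]
      exact hc0
    · rw [mul_div_assoc, div_self hMI, mul_one]
  calc (∑ s : ∀ i, 𝒴 i, ν s * ∑ t : ∀ i, 𝒴 i, (if rest A t = rest A s then K t else 0))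
      ≤ ∑ s : ∀ i, 𝒴 i, ν s * c :=
        Finset.sum_le_sum fun s _ => mul_le_mul_of_nonneg_left (hinner s) (hν s)
    _ = c * ∑ t, ν t := by rw [← Finset.sum_mul, mul_comm]

theorem gibbs {p q : ℝ} (hp : 0 ≤ p) (hq : 0 ≤ q) (h : 0 < p → 0 < q) :
    p - q ≤ p * Real.log (p / q) := by
  rcases hp.lt_or_eq with h0 | h0
  · have hq' := h h0
    have h1 : Real.log (q / p) ≤ q / p - 1 := Real.log_le_sub_one_of_pos (div_pos hq' h0)
    have h2 : Real.log (p / q) = -Real.log (q / p) := by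
      rw [← Real.log_inv]
      congr 1
      rw [inv_div]
    rw [h2]
    have h3 : p * (q / p) = q := by field_simp
    nlinarith [mul_le_mul_of_nonneg_left h1 hp]
  · rw [← h0]
    simp
    linarith

set_option maxHeartbeats 2000000 in
theorem ent_submodular {ν : (∀ i, 𝒴 i) → ℝ} (hν : ∀ t, 0 ≤ ν t) (A B : Finset ι) :
    ent ν (A ∪ B) + ent ν (A ∩ B) ≤ ent ν A + ent ν B := by
  have hAU : A ⊆ A ∪ B := Finset.subset_union_left
  have hBU : B ⊆ A ∪ B := Finset.subset_union_right
  have hIA : A ∩ B ⊆ A := Finset.inter_subset_left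
  have hIU : A ∩ B ⊆ A ∪ B := hIA.trans hAU
  set U := A ∪ B with hU
  set I := A ∩ B with hI
  set c := ∏ i ∈ Uᶜ, (Fintype.card (𝒴 i) : ℝ) with hc
  have hcpos : 0 < c :=
    Finset.prod_pos fun i _ => by exact_mod_cast Fintype.card_pos
  have hrU : ∀ t : ∀ i, 𝒴 i, rest U (extend U (rest U t)) = rest U t :=
    fun t => rest_extend U (rest U t)
  have hrA : ∀ t : ∀ i, 𝒴 i, rest A (extend U (rest U t)) = rest A t :=
    fun t => rest_congr hAU (hrU t)
  have hrB : ∀ t : ∀ i, 𝒴 i, rest B (extend U (rest U t)) = rest B t :=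
    fun t => rest_congr hBU (hrU t)
  have hrI : ∀ t : ∀ i, 𝒴 i, rest I (extend U (rest U t)) = rest I t :=
    fun t => rest_congr hIU (hrU t)
  set F : (∀ i : U, 𝒴 i.1) → ℝ := fun z =>
    Real.log (marg ν U z) + Real.log (marg ν I (rest I (extend U z)))
      - Real.log (marg ν A (rest A (extend U z)))
      - Real.log (marg ν B (rest B (extend U z))) with hF
  set q : (∀ i : U, 𝒴 i.1) → ℝ := fun z =>
    marg ν A (rest A (extend U z)) *
      (marg ν B (rest B (extend U z)) / marg ν I (rest I (extend U z))) with hqdef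
  have hentEq : ∀ S : Finset ι, ent ν S = -∑ t, ν t * Real.log (marg ν S (rest S t)) :=
    fun S => by rw [ent, sum_marg_mul]
  have hΔ : ent ν A + ent ν B - ent ν U - ent ν I = ∑ z, marg ν U z * F z := by
    rw [sum_marg_mul, hentEq A, hentEq B, hentEq U, hentEq I]
    have hFt : ∀ t : ∀ i, 𝒴 i, F (rest U t)
        = Real.log (marg ν U (rest U t)) + Real.log (marg ν I (rest I t))
          - Real.log (marg ν A (rest A t)) - Real.log (marg ν B (rest B t)) := by
      intro t
      rw [hF]
      simp only
      rw [hrA t, hrB t, hrI t]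
    simp_rw [hFt]
    simp only [mul_add, mul_sub]
    rw [Finset.sum_sub_distrib, Finset.sum_sub_distrib, Finset.sum_add_distrib]
    ring
  have hpt : ∀ z, marg ν U z - q z ≤ marg ν U z * F z := by
    intro z
    have hq0 : 0 ≤ q z := mul_nonneg (marg_nonneg hν _ _)
      (div_nonneg (marg_nonneg hν _ _) (marg_nonneg hν _ _))
    rcases (marg_nonneg hν U z).lt_or_eq with hp | hp
    · have hzU : marg ν U (rest U (extend U z)) = marg ν U z :=
        congrArg _ (rest_extend U z)
      have ha : 0 < marg ν A (rest A (extend U z)) := by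
        have hle := marg_le_marg hν hAU (extend U z)
        rw [hzU] at hle
        exact hp.trans_le hle
      have hb : 0 < marg ν B (rest B (extend U z)) := by
        have hle := marg_le_marg hν hBU (extend U z)
        rw [hzU] at hle
        exact hp.trans_le hle
      have hi : 0 < marg ν I (rest I (extend U z)) := by
        have hle := marg_le_marg hν hIU (extend U z)
        rw [hzU] at hle
        exact hp.trans_le hle
      have hqpos : 0 < q z := mul_pos ha (div_pos hb hi)
      have hFz : F z = Real.log (marg ν U z / q z) := by
        rw [hF, hqdef]
        simp only
        rw [Real.log_div (ne_of_gt hp) (ne_of_gt (mul_pos ha (div_pos hb hi))),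
          Real.log_mul (ne_of_gt ha) (ne_of_gt (div_pos hb hi)),
          Real.log_div (ne_of_gt hb) (ne_of_gt hi)]
        ring
      rw [hFz]
      exact gibbs (le_of_lt hp) hq0 (fun _ => hqpos)
    · rw [← hp]
      simp
      linarith
  have hsum1 : ∑ z, marg ν U z = ∑ t, ν t := marg_total ν U
  have hsum2 : ∑ z, q z ≤ ∑ t, ν t := by
    have h9 : ∑ t, q (rest U t) = c * ∑ z, q z := sum_comp_rest U q
    have h10 : ∀ t : ∀ i, 𝒴 i, q (rest U t)
        = marg ν A (rest A t) * (marg ν B (rest B t) / marg ν I (rest I t)) := by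
      intro t
      rw [hqdef]
      simp only
      rw [hrA t, hrB t, hrI t]
    have h11 := key_bound hν A B
    refine (mul_le_mul_iff_right₀ hcpos).mp ?_
    rw [← h9]
    simp_rw [h10]
    exact h11
  have hfin : (∑ t, ν t) - ∑ t, ν t ≤ ∑ z, marg ν U z * F z := by
    calc (∑ t, ν t) - ∑ t, ν t ≤ ∑ z, marg ν U z - ∑ z, q z := by
          rw [hsum1]
          exact sub_le_sub le_rfl hsum2
      _ = ∑ z, (marg ν U z - q z) := (Finset.sum_sub_distrib _ _).symm
      _ ≤ ∑ z, marg ν U z * F z := Finset.sum_le_sum fun z _ => hpt z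
  rw [← hΔ] at hfin
  linarith

theorem ent_empty (ν : (∀ i, 𝒴 i) → ℝ) :
    ent ν ∅ = -((∑ t, ν t) * Real.log (∑ t, ν t)) := by
  rw [ent, sum_marg_mul]
  have h : ∀ t : ∀ i, 𝒴 i, marg ν (∅ : Finset ι) (rest ∅ t) = ∑ s, ν s := by
    intro t
    rw [marg]
    refine Finset.sum_congr rfl fun s _ => ?_
    rw [if_pos]
    funext i
    exact absurd i.2 (Finset.notMem_empty i.1)
  simp_rw [h]
  rw [← Finset.sum_mul]
end EntSub

def pairPi {κ : Type*} {Y Z : κ → Type*} : ((∀ i, Y i) × (∀ i, Z i)) ≃ (∀ i, Y i × Z i) where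
  toFun p := fun i => (p.1 i, p.2 i)
  invFun t := (fun i => (t i).1, fun i => (t i).2)
  left_inv p := rfl
  right_inv t := rfl

namespace AppGlue
variable {d : ℕ} (𝒳 : Fin d → Type) [∀ i, Fintype (𝒳 i)] [∀ i, Nonempty (𝒳 i)]
  (π : (∀ i, 𝒳 i) → ℝ) (P : (∀ i, 𝒳 i) → (∀ i, 𝒳 i) → ℝ)

def nu : (∀ i : Fin d, 𝒳 i × 𝒳 i) → ℝ :=
  fun t => π (fun i => (t i).1) * P (fun i => (t i).1) (fun i => (t i).2)

def pairMarg (S : Finset (Fin d)) (z w : ∀ i : S, 𝒳 i.1) : ℝ :=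
  ∑ x : ∀ i, 𝒳 i, ∑ y : ∀ i, 𝒳 i,
    if restrict 𝒳 S x = z ∧ restrict 𝒳 S y = w then π x * P x y else 0

theorem marg_pair (S : Finset (Fin d)) (z w : ∀ i : S, 𝒳 i.1) :
    EntSub.marg (nu 𝒳 π P) S (fun i => (z i, w i)) = pairMarg 𝒳 π P S z w := by
  rw [EntSub.marg, pairMarg]
  refine ((Fintype.sum_equiv (pairPi (Y := 𝒳) (Z := 𝒳))
      (fun p => if restrict 𝒳 S p.1 = z ∧ restrict 𝒳 S p.2 = w then π p.1 * P p.1 p.2 else 0)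
      _ (fun p => ?_)).symm.trans ?_)
  · have hiff : (restrict 𝒳 S p.1 = z ∧ restrict 𝒳 S p.2 = w)
        ↔ (EntSub.rest S (pairPi p) = fun i : S => (z i, w i)) := by
      constructor
      · rintro ⟨h1, h2⟩
        funext i
        exact Prod.ext (congrFun h1 i) (congrFun h2 i)
      · intro h
        exact ⟨funext fun i => congrArg Prod.fst (congrFun h i),
          funext fun i => congrArg Prod.snd (congrFun h i)⟩
    by_cases h : restrict 𝒳 S p.1 = z ∧ restrict 𝒳 S p.2 = w
    · rw [if_pos h, if_pos (hiff.mp h)]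
      rfl
    · rw [if_neg h, if_neg (fun hh => h (hiff.mpr hh))]
  · exact Fintype.sum_prod_type _

theorem ent_pair (S : Finset (Fin d)) :
    EntSub.ent (nu 𝒳 π P) S
      = -∑ z, ∑ w, pairMarg 𝒳 π P S z w * Real.log (pairMarg 𝒳 π P S z w) := by
  rw [EntSub.ent]
  congr 1
  refine ((Fintype.sum_equiv (pairPi (Y := fun i : S => 𝒳 i.1) (Z := fun i : S => 𝒳 i.1))
      (fun p => EntSub.marg (nu 𝒳 π P) S (fun i => (p.1 i, p.2 i)) *
        Real.log (EntSub.marg (nu 𝒳 π P) S (fun i => (p.1 i, p.2 i))))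
      _ (fun p => rfl)).symm.trans ?_)
  refine (Fintype.sum_prod_type _).trans ?_
  exact Finset.sum_congr rfl fun z _ => Finset.sum_congr rfl fun w _ => by
    rw [marg_pair]

theorem sm_sum_one (hπsum : ∑ x, π x = 1) (i : Fin d) :
    ∑ a, singleMarginal 𝒳 π i a = 1 := by
  unfold singleMarginal
  rw [Finset.sum_comm]
  have h : ∀ x : ∀ j, 𝒳 j, (∑ a : 𝒳 i, if x i = a then π x else 0) = π x := by
    intro x
    rw [Finset.sum_ite_eq]
    simp
  simp_rw [h]
  exact hπsum

theorem sm_pos (hπpos : ∀ x, 0 < π x) (i : Fin d) (a : 𝒳 i) :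
    0 < singleMarginal 𝒳 π i a := by
  unfold singleMarginal
  refine Finset.sum_pos'
    (fun x _ => by split <;> [exact (hπpos x).le; exact le_rfl]) ?_
  refine ⟨Function.update (fun j => Classical.arbitrary (𝒳 j)) i a, Finset.mem_univ _, ?_⟩
  rw [if_pos (by simp)]
  exact hπpos _

theorem marginal_prod (hπsum : ∑ x, π x = 1)
    (hprod : ∀ x : ∀ i, 𝒳 i, π x = ∏ i, singleMarginal 𝒳 π i (x i))
    (S : Finset (Fin d)) (z : ∀ i : S, 𝒳 i.1) :
    marginal 𝒳 π S z = ∏ i : S, singleMarginal 𝒳 π i.1 (z i) := by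
  unfold marginal
  have h1 : ∀ x : ∀ i, 𝒳 i, (if restrict 𝒳 S x = z then π x else 0)
      = ∏ i : Fin d, (if h : i ∈ S then
          (if x i = z ⟨i, h⟩ then singleMarginal 𝒳 π i (x i) else 0)
          else singleMarginal 𝒳 π i (x i)) := by
    intro x
    by_cases hx : restrict 𝒳 S x = z
    · rw [if_pos hx, hprod x]
      refine Finset.prod_congr rfl fun i _ => ?_
      by_cases hi : i ∈ S
      · rw [dif_pos hi, if_pos (show x i = z ⟨i, hi⟩ from congrFun hx ⟨i, hi⟩)]
      · rw [dif_neg hi]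
    · rw [if_neg hx, eq_comm]
      have hex : ∃ i : S, x i.1 ≠ z i := by
        by_contra hc
        push_neg at hc
        exact hx (funext fun i => hc i)
      obtain ⟨i, hi⟩ := hex
      rw [Finset.prod_eq_zero (Finset.mem_univ i.1)]
      rw [dif_pos i.2, if_neg hi]
  simp_rw [h1]
  have hps : (∏ i : Fin d, ∑ a : 𝒳 i, (if h : i ∈ S then
        (if a = z ⟨i, h⟩ then singleMarginal 𝒳 π i a else 0)
        else singleMarginal 𝒳 π i a))
      = ∑ x ∈ Fintype.piFinset (fun i : Fin d => (Finset.univ : Finset (𝒳 i))),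
          ∏ i : Fin d, (if h : i ∈ S then
            (if x i = z ⟨i, h⟩ then singleMarginal 𝒳 π i (x i) else 0)
            else singleMarginal 𝒳 π i (x i)) := Finset.prod_univ_sum _ _
  rw [← Fintype.piFinset_univ, ← hps]
  have h2 : ∀ i : Fin d, (∑ a : 𝒳 i, (if h : i ∈ S then
        (if a = z ⟨i, h⟩ then singleMarginal 𝒳 π i a else 0)
        else singleMarginal 𝒳 π i a))
      = if h : i ∈ S then singleMarginal 𝒳 π i (z ⟨i, h⟩) else 1 := by
    intro i
    by_cases hi : i ∈ S
    · simp only [dif_pos hi]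
      rw [Finset.sum_ite_eq']
      simp
    · simp only [dif_neg hi]
      exact sm_sum_one 𝒳 π hπsum i
  simp_rw [h2]
  rw [← Finset.prod_subset (Finset.subset_univ S) (fun i _ hi => dif_neg hi)]
  rw [← Finset.prod_attach S (fun i => if h : i ∈ S then singleMarginal 𝒳 π i (z ⟨i, h⟩) else 1)]
  rw [Finset.univ_eq_attach]
  exact Finset.prod_congr rfl fun i _ => by rw [dif_pos i.2]

theorem marginal_pos (hπpos : ∀ x, 0 < π x) (hπsum : ∑ x, π x = 1)
    (hprod : ∀ x : ∀ i, 𝒳 i, π x = ∏ i, singleMarginal 𝒳 π i (x i))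
    (S : Finset (Fin d)) (z : ∀ i : S, 𝒳 i.1) : 0 < marginal 𝒳 π S z := by
  rw [marginal_prod 𝒳 π hπsum hprod]
  exact Finset.prod_pos fun i _ => sm_pos 𝒳 π hπpos i.1 (z i)

theorem marginal_sum_one (hπsum : ∑ x, π x = 1) (S : Finset (Fin d)) :
    ∑ z, marginal 𝒳 π S z = 1 := by
  have h : marginal 𝒳 π S = EntSub.marg π S := rfl
  rw [h, EntSub.marg_total, hπsum]

theorem pairMarg_nonneg (hπpos : ∀ x, 0 < π x) (hPnonneg : ∀ x y, 0 ≤ P x y)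
    (S : Finset (Fin d)) (z w : ∀ i : S, 𝒳 i.1) : 0 ≤ pairMarg 𝒳 π P S z w :=
  Finset.sum_nonneg fun x _ => Finset.sum_nonneg fun y _ => by
    split <;> [exact mul_nonneg (hπpos x).le (hPnonneg x y); exact le_rfl]

theorem pairMarg_row (hProw : ∀ x, ∑ y, P x y = 1) (S : Finset (Fin d))
    (z : ∀ i : S, 𝒳 i.1) :
    ∑ w, pairMarg 𝒳 π P S z w = marginal 𝒳 π S z := by
  unfold pairMarg marginal
  rw [Finset.sum_comm]
  refine Finset.sum_congr rfl fun x _ => ?_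
  by_cases h : restrict 𝒳 S x = z
  · rw [if_pos h, Finset.sum_comm]
    have h3 : ∀ y : ∀ i, 𝒳 i,
        (∑ w, if restrict 𝒳 S x = z ∧ restrict 𝒳 S y = w then π x * P x y else 0)
          = π x * P x y := by
      intro y
      have hzw : ∀ w, (if restrict 𝒳 S x = z ∧ restrict 𝒳 S y = w then π x * P x y else 0)
          = (if restrict 𝒳 S y = w then π x * P x y else 0) := fun w => by
        by_cases h2 : restrict 𝒳 S y = w
        · rw [if_pos h2, if_pos ⟨h, h2⟩]
        · rw [if_neg h2, if_neg (fun hh => h2 hh.2)]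
      simp_rw [hzw]
      rw [Finset.sum_ite_eq]
      simp
    simp_rw [h3]
    rw [← Finset.mul_sum, hProw x, mul_one]
  · rw [if_neg h]
    refine Finset.sum_eq_zero fun w _ => Finset.sum_eq_zero fun y _ => ?_
    rw [if_neg (fun hh => h hh.1)]

theorem pairMarg_col (hstat : ∀ y, ∑ x, π x * P x y = π y) (S : Finset (Fin d))
    (w : ∀ i : S, 𝒳 i.1) :
    ∑ z, pairMarg 𝒳 π P S z w = marginal 𝒳 π S w := by
  unfold pairMarg marginal
  rw [Finset.sum_comm]
  have hx : ∀ x : ∀ i, 𝒳 i,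
      (∑ z, ∑ y, if restrict 𝒳 S x = z ∧ restrict 𝒳 S y = w then π x * P x y else 0)
        = ∑ y, (if restrict 𝒳 S y = w then π x * P x y else 0) := by
    intro x
    rw [Finset.sum_comm]
    refine Finset.sum_congr rfl fun y _ => ?_
    by_cases h2 : restrict 𝒳 S y = w
    · rw [if_pos h2]
      have hz : ∀ z, (if restrict 𝒳 S x = z ∧ restrict 𝒳 S y = w then π x * P x y else 0)
          = (if restrict 𝒳 S x = z then π x * P x y else 0) := fun z => by
        by_cases h3 : restrict 𝒳 S x = z
        · rw [if_pos h3, if_pos ⟨h3, h2⟩]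
        · rw [if_neg h3, if_neg (fun hh => h3 hh.1)]
      simp_rw [hz]
      rw [Finset.sum_ite_eq]
      simp
    · rw [if_neg h2]
      exact Finset.sum_eq_zero fun z _ => if_neg (fun hh => h2 hh.2)
  simp_rw [hx]
  rw [Finset.sum_comm]
  refine Finset.sum_congr rfl fun y _ => ?_
  by_cases h2 : restrict 𝒳 S y = w
  · calc (∑ x, if restrict 𝒳 S y = w then π x * P x y else 0)
        = ∑ x, π x * P x y := Finset.sum_congr rfl fun x _ => if_pos h2
      _ = π y := hstat y
      _ = _ := (if_pos h2).symm
  · calc (∑ x, if restrict 𝒳 S y = w then π x * P x y else 0)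
        = 0 := Finset.sum_eq_zero fun x _ => if_neg h2
      _ = _ := (if_neg h2).symm

def HsD (i : Fin d) : ℝ :=
  -∑ a, singleMarginal 𝒳 π i a * Real.log (singleMarginal 𝒳 π i a)

def HpD (S : Finset (Fin d)) : ℝ :=
  -∑ z, ∑ w, pairMarg 𝒳 π P S z w * Real.log (pairMarg 𝒳 π P S z w)

theorem Hm_add (hπpos : ∀ x, 0 < π x) (hπsum : ∑ x, π x = 1)
    (hprod : ∀ x : ∀ i, 𝒳 i, π x = ∏ i, singleMarginal 𝒳 π i (x i))
    (S : Finset (Fin d)) :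
    -∑ z, marginal 𝒳 π S z * Real.log (marginal 𝒳 π S z) = ∑ i ∈ S, HsD 𝒳 π i := by
  have hlog : ∀ z : ∀ i : S, 𝒳 i.1,
      marginal 𝒳 π S z * Real.log (marginal 𝒳 π S z)
        = ∑ i : S, (∏ j : S, singleMarginal 𝒳 π j.1 (z j))
            * Real.log (singleMarginal 𝒳 π i.1 (z i)) := by
    intro z
    rw [marginal_prod 𝒳 π hπsum hprod, Real.log_prod
      (fun i _ => (sm_pos 𝒳 π hπpos i.1 (z i)).ne'), Finset.mul_sum]
  simp_rw [hlog]
  rw [Finset.sum_comm]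
  have hterm : ∀ i : S,
      (∑ z : ∀ j : S, 𝒳 j.1, (∏ j : S, singleMarginal 𝒳 π j.1 (z j))
          * Real.log (singleMarginal 𝒳 π i.1 (z i)))
        = ∑ a : 𝒳 i.1, singleMarginal 𝒳 π i.1 a * Real.log (singleMarginal 𝒳 π i.1 a) := by
    intro i
    have h1 : ∀ z : ∀ j : S, 𝒳 j.1,
        (∏ j : S, singleMarginal 𝒳 π j.1 (z j)) * Real.log (singleMarginal 𝒳 π i.1 (z i))
          = ∏ j : S, (if j = i then
              singleMarginal 𝒳 π j.1 (z j) * Real.log (singleMarginal 𝒳 π j.1 (z j))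
              else singleMarginal 𝒳 π j.1 (z j)) := by
      intro z
      have e1 : (∏ j : S, singleMarginal 𝒳 π j.1 (z j))
          = singleMarginal 𝒳 π i.1 (z i)
            * ∏ j ∈ Finset.univ.erase i, singleMarginal 𝒳 π j.1 (z j) :=
        (Finset.mul_prod_erase Finset.univ _ (Finset.mem_univ i)).symm
      have e2 : (∏ j : S, (if j = i then
              singleMarginal 𝒳 π j.1 (z j) * Real.log (singleMarginal 𝒳 π j.1 (z j))
              else singleMarginal 𝒳 π j.1 (z j)))
          = (singleMarginal 𝒳 π i.1 (z i) * Real.log (singleMarginal 𝒳 π i.1 (z i)))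
            * ∏ j ∈ Finset.univ.erase i, singleMarginal 𝒳 π j.1 (z j) := by
        rw [← Finset.mul_prod_erase Finset.univ _ (Finset.mem_univ i), if_pos rfl]
        congr 1
        exact Finset.prod_congr rfl fun j hj => if_neg (Finset.ne_of_mem_erase hj)
      rw [e1, e2]
      ring
    simp_rw [h1]
    have h2 := Finset.prod_univ_sum (fun j : S => (Finset.univ : Finset (𝒳 j.1)))
      (fun j a => if j = i then
        singleMarginal 𝒳 π j.1 a * Real.log (singleMarginal 𝒳 π j.1 a)
        else singleMarginal 𝒳 π j.1 a)
    rw [← Fintype.piFinset_univ, ← h2]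
    have h3 : ∀ j : S, (∑ a : 𝒳 j.1, if j = i then
          singleMarginal 𝒳 π j.1 a * Real.log (singleMarginal 𝒳 π j.1 a)
          else singleMarginal 𝒳 π j.1 a)
        = if j = i then
            (∑ a : 𝒳 j.1, singleMarginal 𝒳 π j.1 a * Real.log (singleMarginal 𝒳 π j.1 a))
            else 1 := by
      intro j
      by_cases hj : j = i
      · simp only [if_pos hj]
      · simp only [if_neg hj]
        exact sm_sum_one 𝒳 π hπsum j.1
    simp_rw [h3]
    rw [Finset.prod_ite_eq' Finset.univ i]
    simp
  simp_rw [hterm]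
  rw [neg_eq_iff_eq_neg, ← Finset.sum_neg_distrib]
  rw [← Finset.sum_attach S (fun i => -HsD 𝒳 π i), Finset.univ_eq_attach]
  refine Finset.sum_congr rfl fun i _ => ?_
  rw [HsD]
  ring

theorem nu_nonneg (hπpos : ∀ x, 0 < π x) (hPnonneg : ∀ x y, 0 ≤ P x y) :
    ∀ t, 0 ≤ nu 𝒳 π P t := fun _ => mul_nonneg (hπpos _).le (hPnonneg _ _)

theorem nu_total (hπsum : ∑ x, π x = 1) (hProw : ∀ x, ∑ y, P x y = 1) :
    ∑ t, nu 𝒳 π P t = 1 := by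
  have h := Fintype.sum_equiv (pairPi (Y := 𝒳) (Z := 𝒳))
    (fun p => π p.1 * P p.1 p.2) (nu 𝒳 π P) (fun p => rfl)
  rw [← h, Fintype.sum_prod_type]
  have h2 : ∀ x : ∀ i, 𝒳 i, (∑ y, π x * P x y) = π x := by
    intro x
    rw [← Finset.mul_sum, hProw x, mul_one]
  simp_rw [h2]
  exact hπsum

theorem HpD_eq_ent (S : Finset (Fin d)) :
    HpD 𝒳 π P S = EntSub.ent (nu 𝒳 π P) S := by
  rw [ent_pair, HpD]

theorem HpD_empty (hπsum : ∑ x, π x = 1) (hProw : ∀ x, ∑ y, P x y = 1) :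
    HpD 𝒳 π P ∅ = 0 := by
  rw [HpD_eq_ent, EntSub.ent_empty, nu_total 𝒳 π P hπsum hProw, Real.log_one]
  simp

theorem HpD_submod (hπpos : ∀ x, 0 < π x) (hPnonneg : ∀ x y, 0 ≤ P x y)
    (A B : Finset (Fin d)) :
    HpD 𝒳 π P (A ∪ B) + HpD 𝒳 π P (A ∩ B) ≤ HpD 𝒳 π P A + HpD 𝒳 π P B := by
  simp only [HpD_eq_ent]
  exact EntSub.ent_submodular (nu_nonneg 𝒳 π P hπpos hPnonneg) A B

theorem dist_repr (hπpos : ∀ x, 0 < π x) (hπsum : ∑ x, π x = 1)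
    (hprod : ∀ x : ∀ i, 𝒳 i, π x = ∏ i, singleMarginal 𝒳 π i (x i))
    (S : Finset (Fin d)) :
    distToStat 𝒳 π P S = ∑ z, ∑ w, pairMarg 𝒳 π P S z w
      * Real.log (pairMarg 𝒳 π P S z w / (marginal 𝒳 π S z * marginal 𝒳 π S w)) := by
  unfold distToStat klRate
  have hk : ∀ z w : ∀ i : S, 𝒳 i.1,
      keepIn 𝒳 π P S z w = pairMarg 𝒳 π P S z w / marginal 𝒳 π S z := fun _ _ => rfl
  simp_rw [hk]
  refine Finset.sum_congr rfl fun z _ => Finset.sum_congr rfl fun w _ => ?_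
  have hm : marginal 𝒳 π S z ≠ 0 := (marginal_pos 𝒳 π hπpos hπsum hprod S z).ne'
  rw [div_div, mul_comm (marginal 𝒳 π S z) (pairMarg 𝒳 π P S z w / marginal 𝒳 π S z),
    div_mul_cancel₀ _ hm]

theorem dist_eq (hπpos : ∀ x, 0 < π x) (hπsum : ∑ x, π x = 1)
    (hprod : ∀ x : ∀ i, 𝒳 i, π x = ∏ i, singleMarginal 𝒳 π i (x i))
    (hProw : ∀ x, ∑ y, P x y = 1) (hstat : ∀ y, ∑ x, π x * P x y = π y)
    (S : Finset (Fin d)) :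
    distToStat 𝒳 π P S = 2 * (∑ i ∈ S, HsD 𝒳 π i) - HpD 𝒳 π P S := by
  rw [dist_repr 𝒳 π P hπpos hπsum hprod S]
  have hsplit : ∀ (z w : ∀ i : S, 𝒳 i.1),
      pairMarg 𝒳 π P S z w
          * Real.log (pairMarg 𝒳 π P S z w / (marginal 𝒳 π S z * marginal 𝒳 π S w))
        = pairMarg 𝒳 π P S z w * Real.log (pairMarg 𝒳 π P S z w)
          - pairMarg 𝒳 π P S z w * Real.log (marginal 𝒳 π S z)
          - pairMarg 𝒳 π P S z w * Real.log (marginal 𝒳 π S w) := by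
    intro z w
    by_cases hp : pairMarg 𝒳 π P S z w = 0
    · rw [hp]
      ring
    · have h1 : marginal 𝒳 π S z ≠ 0 := (marginal_pos 𝒳 π hπpos hπsum hprod S z).ne'
      have h2 : marginal 𝒳 π S w ≠ 0 := (marginal_pos 𝒳 π hπpos hπsum hprod S w).ne'
      rw [Real.log_div hp (mul_ne_zero h1 h2), Real.log_mul h1 h2]
      ring
  simp_rw [hsplit]
  simp only [Finset.sum_sub_distrib]
  have hb : (∑ z, ∑ w, pairMarg 𝒳 π P S z w * Real.log (marginal 𝒳 π S z))
      = ∑ z, marginal 𝒳 π S z * Real.log (marginal 𝒳 π S z) := by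
    refine Finset.sum_congr rfl fun z _ => ?_
    rw [← Finset.sum_mul, pairMarg_row 𝒳 π P hProw S z]
  have hc : (∑ z, ∑ w, pairMarg 𝒳 π P S z w * Real.log (marginal 𝒳 π S w))
      = ∑ z, marginal 𝒳 π S z * Real.log (marginal 𝒳 π S z) := by
    rw [Finset.sum_comm]
    refine Finset.sum_congr rfl fun w _ => ?_
    rw [← Finset.sum_mul, pairMarg_col 𝒳 π P hstat S w]
  rw [hb, hc, HpD]
  have hm := Hm_add 𝒳 π hπpos hπsum hprod S
  linarith

theorem dist_nonneg (hπpos : ∀ x, 0 < π x) (hπsum : ∑ x, π x = 1)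
    (hprod : ∀ x : ∀ i, 𝒳 i, π x = ∏ i, singleMarginal 𝒳 π i (x i))
    (hPnonneg : ∀ x y, 0 ≤ P x y) (hProw : ∀ x, ∑ y, P x y = 1)
    (S : Finset (Fin d)) : 0 ≤ distToStat 𝒳 π P S := by
  rw [dist_repr 𝒳 π P hπpos hπsum hprod S]
  have hpt : ∀ (z w : ∀ i : S, 𝒳 i.1),
      pairMarg 𝒳 π P S z w - marginal 𝒳 π S z * marginal 𝒳 π S w
        ≤ pairMarg 𝒳 π P S z w
          * Real.log (pairMarg 𝒳 π P S z w / (marginal 𝒳 π S z * marginal 𝒳 π S w)) := by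
    intro z w
    exact EntSub.gibbs (pairMarg_nonneg 𝒳 π P hπpos hPnonneg S z w)
      (mul_nonneg (marginal_pos 𝒳 π hπpos hπsum hprod S z).le
        (marginal_pos 𝒳 π hπpos hπsum hprod S w).le)
      (fun _ => mul_pos (marginal_pos 𝒳 π hπpos hπsum hprod S z)
        (marginal_pos 𝒳 π hπpos hπsum hprod S w))
  have hsum := Finset.sum_le_sum
    (fun z (_ : z ∈ Finset.univ) => Finset.sum_le_sum (fun w (_ : w ∈ Finset.univ) => hpt z w))
  simp only [Finset.sum_sub_distrib] at hsum
  have h1 : (∑ z, ∑ w, pairMarg 𝒳 π P S z w) = 1 := by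
    have : ∀ z, (∑ w, pairMarg 𝒳 π P S z w) = marginal 𝒳 π S z :=
      pairMarg_row 𝒳 π P hProw S
    simp_rw [this]
    exact marginal_sum_one 𝒳 π hπsum S
  have h2 : (∑ z, ∑ w, marginal 𝒳 π S z * marginal 𝒳 π S w) = 1 := by
    have : ∀ z : ∀ i : S, 𝒳 i.1, (∑ w, marginal 𝒳 π S z * marginal 𝒳 π S w)
        = marginal 𝒳 π S z := by
      intro z
      rw [← Finset.mul_sum, marginal_sum_one 𝒳 π hπsum S, mul_one]
    simp_rw [this]
    exact marginal_sum_one 𝒳 π hπsum S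
  rw [h1, h2] at hsum
  linarith

theorem dist_supermod (hπpos : ∀ x, 0 < π x) (hπsum : ∑ x, π x = 1)
    (hprod : ∀ x : ∀ i, 𝒳 i, π x = ∏ i, singleMarginal 𝒳 π i (x i))
    (hPnonneg : ∀ x y, 0 ≤ P x y) (hProw : ∀ x, ∑ y, P x y = 1)
    (hstat : ∀ y, ∑ x, π x * P x y = π y) (A B : Finset (Fin d)) :
    distToStat 𝒳 π P A + distToStat 𝒳 π P B
      ≤ distToStat 𝒳 π P (A ∩ B) + distToStat 𝒳 π P (A ∪ B) := by
  rw [dist_eq 𝒳 π P hπpos hπsum hprod hProw hstat A,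
    dist_eq 𝒳 π P hπpos hπsum hprod hProw hstat B,
    dist_eq 𝒳 π P hπpos hπsum hprod hProw hstat (A ∩ B),
    dist_eq 𝒳 π P hπpos hπsum hprod hProw hstat (A ∪ B)]
  have hmod := Finset.sum_union_inter (s₁ := A) (s₂ := B) (f := fun i => HsD 𝒳 π i)
  have hsub := HpD_submod 𝒳 π P hπpos hPnonneg A B
  linarith

theorem dist_mono (hπpos : ∀ x, 0 < π x) (hπsum : ∑ x, π x = 1)
    (hprod : ∀ x : ∀ i, 𝒳 i, π x = ∏ i, singleMarginal 𝒳 π i (x i))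
    (hPnonneg : ∀ x y, 0 ≤ P x y) (hProw : ∀ x, ∑ y, P x y = 1)
    (hstat : ∀ y, ∑ x, π x * P x y = π y) {A B : Finset (Fin d)} (hAB : A ⊆ B) :
    distToStat 𝒳 π P A ≤ distToStat 𝒳 π P B := by
  have h1 := dist_nonneg 𝒳 π P hπpos hπsum hprod hPnonneg hProw (B \ A)
  have h2 := HpD_submod 𝒳 π P hπpos hPnonneg A (B \ A)
  rw [Finset.union_sdiff_of_subset hAB, Finset.inter_sdiff_self,
    HpD_empty 𝒳 π P hπsum hProw] at h2
  have h4 : (∑ i ∈ B \ A, HsD 𝒳 π i) + ∑ i ∈ A, HsD 𝒳 π i = ∑ i ∈ B, HsD 𝒳 π i :=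
    Finset.sum_sdiff hAB
  rw [dist_eq 𝒳 π P hπpos hπsum hprod hProw hstat A,
    dist_eq 𝒳 π P hπpos hπsum hprod hProw hstat B]
  rw [dist_eq 𝒳 π P hπpos hπsum hprod hProw hstat (B \ A)] at h1
  linarith

end AppGlue

/-- If `P` is `π`-stationary with `π` of product form and
`𝐕 ∈ (k+1)^⟦d⟧` is fixed, then the map
`𝐒 ↦ D(⊗_{i=1}^k P^(V_i \ S_i) ‖ ⊗_{i=1}^k Π^(V_i \ S_i))
  = Σ_{i=1}^k D(P^(V_i \ S_i) ‖ Π^(V_i \ S_i))`,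
defined on `{𝐒 ∈ (k+1)^⟦d⟧ : 𝐒 ≼ 𝐕}`, is monotonically non-increasing and
`k`-supermodular. -/
theorem distToStat_complement_tuple_antitone_and_k_supermodular
    (𝒳 : Fin d → Type) [∀ i, Fintype (𝒳 i)] [∀ i, Nonempty (𝒳 i)]
    (π : (∀ i, 𝒳 i) → ℝ) (P : (∀ i, 𝒳 i) → (∀ i, 𝒳 i) → ℝ)
    (hπpos : ∀ x, 0 < π x) (hπsum : ∑ x, π x = 1)
    (hPnonneg : ∀ x y, 0 ≤ P x y) (hProw : ∀ x, ∑ y, P x y = 1)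
    (hstat : ∀ y, ∑ x, π x * P x y = π y)
    (hprod : ∀ x : ∀ i, 𝒳 i, π x = ∏ i, singleMarginal 𝒳 π i (x i))
    (k : ℕ) (V : Fin k → Finset (Fin d)) (hV : PwDisj V) :
    (∀ S T : Fin k → Finset (Fin d), PwDisj S → PwDisj T →
        (∀ i, S i ⊆ T i) → (∀ i, T i ⊆ V i) →
        (∑ i, distToStat 𝒳 π P (V i \ T i)) ≤ ∑ i, distToStat 𝒳 π P (V i \ S i)) ∧
    (∀ S T : Fin k → Finset (Fin d), PwDisj S → PwDisj T →
        (∀ i, S i ⊆ V i) → (∀ i, T i ⊆ V i) →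
        (∑ i, distToStat 𝒳 π P (V i \ S i)) + (∑ i, distToStat 𝒳 π P (V i \ T i)) ≤
          (∑ i, distToStat 𝒳 π P (V i \ kInf S T i)) +
            (∑ i, distToStat 𝒳 π P (V i \ kSup S T i))) := by
  constructor
  · intro S T _ _ hST hTV
    refine Finset.sum_le_sum fun i _ => ?_
    exact AppGlue.dist_mono 𝒳 π P hπpos hπsum hprod hPnonneg hProw hstat
      (Finset.sdiff_subset_sdiff (Finset.Subset.refl (V i)) (hST i))
  · intro S T _ _ hSV hTV
    have hkSup : ∀ i, kSup S T i = S i ∪ T i := by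
      intro i
      rw [kSup]
      apply Finset.sdiff_eq_self_of_disjoint
      rw [Finset.disjoint_biUnion_right]
      intro j hj
      have hij : i ≠ j := (Finset.ne_of_mem_erase hj).symm
      have h1 : S i ∪ T i ⊆ V i := Finset.union_subset (hSV i) (hTV i)
      have h2 : S j ∪ T j ⊆ V j := Finset.union_subset (hSV j) (hTV j)
      exact Finset.disjoint_of_subset_left h1
        (Finset.disjoint_of_subset_right h2 (hV i j hij))
    have hper : ∀ i : Fin k,
        distToStat 𝒳 π P (V i \ S i) + distToStat 𝒳 π P (V i \ T i)
          ≤ distToStat 𝒳 π P (V i \ kInf S T i) + distToStat 𝒳 π P (V i \ kSup S T i) := by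
      intro i
      rw [hkSup i]
      have hinf : kInf S T i = S i ∩ T i := rfl
      rw [hinf, Finset.sdiff_inter_distrib_right, Finset.sdiff_union_distrib]
      have := AppGlue.dist_supermod 𝒳 π P hπpos hπsum hprod hPnonneg hProw hstat
        (V i \ S i) (V i \ T i)
      linarith
    calc (∑ i, distToStat 𝒳 π P (V i \ S i)) + (∑ i, distToStat 𝒳 π P (V i \ T i))
        = ∑ i, (distToStat 𝒳 π P (V i \ S i) + distToStat 𝒳 π P (V i \ T i)) :=
          Finset.sum_add_distrib.symm
      _ ≤ ∑ i, (distToStat 𝒳 π P (V i \ kInf S T i) + distToStat 𝒳 π P (V i \ kSup S T i)) :=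
          Finset.sum_le_sum fun i _ => hper i
      _ = _ := Finset.sum_add_distrib

end
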